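/- Let d ≥ 2 and let μ be the uniform probability measure on the closed Euclidean unit ball of ℝ^d. Fix δ ∈ [0,1), a unit vector b ∈ ℝ^d, and a unit vector w ∈ ℝ^d. Then ∫_{{x : ⟨b, x⟩ ≥ δ}} ⟨w, x⟩² dμ(x) = α + (γ − α) · ⟨w, b⟩², where α := ∫_{{x : x₁ ≥ δ}} x₂² dμ(x) and γ := ∫_{{x : x₁ ≥ δ}} x₁² dμ(x), with x₁, x₂ the first two coordinates of x. -/

import Mathlib

open scoped RealInnerProductSpace
open MeasureTheory

section Aux

variable {d : ℕ}

lemma aux_abs_le_norm (y : EuclideanSpace ℝ (Fin d)) (i : Fin d) : |y i| ≤ ‖y‖ := by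
  have h1 : ⟪EuclideanSpace.single i (1:ℝ), y⟫ = y i := by
    rw [EuclideanSpace.inner_single_left]; simp
  have h2 := abs_real_inner_le_norm (EuclideanSpace.single i (1:ℝ)) y
  rw [h1, EuclideanSpace.norm_single] at h2
  simpa using h2

lemma aux_mp (μ : Measure (EuclideanSpace ℝ (Fin d)))
    (hμ : μ = (volume (Metric.closedBall (0 : EuclideanSpace ℝ (Fin d)) 1))⁻¹ •
      volume.restrict (Metric.closedBall (0 : EuclideanSpace ℝ (Fin d)) 1))
    (e : EuclideanSpace ℝ (Fin d) ≃ₗᵢ[ℝ] EuclideanSpace ℝ (Fin d)) :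
    MeasurePreserving e μ μ := by
  have h := e.measurePreserving
  have hball : ⇑e ⁻¹' Metric.closedBall 0 1 = Metric.closedBall (0:EuclideanSpace ℝ (Fin d)) 1 := by
    ext x
    simp [Metric.mem_closedBall, dist_zero_right, e.norm_map]
  subst hμ
  have h2 := h.restrict_preimage_emb e.toHomeomorph.measurableEmbedding
    (Metric.closedBall 0 1)
  rw [hball] at h2
  exact h2.smul_measure _

lemma aux_ae_ball (μ : Measure (EuclideanSpace ℝ (Fin d)))
    (hμ : μ = (volume (Metric.closedBall (0 : EuclideanSpace ℝ (Fin d)) 1))⁻¹ •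
      volume.restrict (Metric.closedBall (0 : EuclideanSpace ℝ (Fin d)) 1))
    (S : Set (EuclideanSpace ℝ (Fin d))) :
    ∀ᵐ y ∂(μ.restrict S), ‖y‖ ≤ 1 := by
  have hset : {y : EuclideanSpace ℝ (Fin d) | ¬ ‖y‖ ≤ 1}
      = (Metric.closedBall (0 : EuclideanSpace ℝ (Fin d)) 1)ᶜ := by
    ext y
    simp [Metric.mem_closedBall, dist_zero_right]
  have h0 : μ {y : EuclideanSpace ℝ (Fin d) | ¬ ‖y‖ ≤ 1} = 0 := by
    rw [hμ, hset]
    simp only [Measure.smul_apply, smul_eq_mul]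
    rw [Measure.restrict_apply Metric.isClosed_closedBall.measurableSet.compl,
      Set.compl_inter_self, measure_empty, mul_zero]
  have h0' : (μ.restrict S) {y : EuclideanSpace ℝ (Fin d) | ¬ ‖y‖ ≤ 1} = 0 :=
    le_antisymm (le_trans (Measure.restrict_le_self _) h0.le) zero_le
  exact h0'

lemma aux_integrable (μ : Measure (EuclideanSpace ℝ (Fin d)))
    (hμ : μ = (volume (Metric.closedBall (0 : EuclideanSpace ℝ (Fin d)) 1))⁻¹ •
      volume.restrict (Metric.closedBall (0 : EuclideanSpace ℝ (Fin d)) 1))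
    (S : Set (EuclideanSpace ℝ (Fin d))) (i j : Fin d) :
    Integrable (fun y : EuclideanSpace ℝ (Fin d) => y i * y j) (μ.restrict S) := by
  have hfin : IsFiniteMeasure μ := by
    rw [hμ]
    constructor
    rw [Measure.smul_apply, smul_eq_mul,
      Measure.restrict_apply MeasurableSet.univ, Set.univ_inter]
    exact ENNReal.mul_lt_top (ENNReal.inv_lt_top.2
      (Metric.measure_closedBall_pos volume (0 : EuclideanSpace ℝ (Fin d)) one_pos))
      measure_closedBall_lt_top
  refine Integrable.mono' (integrable_const 1)
    ((by fun_prop : Continuous (fun y : EuclideanSpace ℝ (Fin d) => y i * y j)).aestronglyMeasurable) ?_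
  filter_upwards [aux_ae_ball μ hμ S] with y hy
  have hi : |y i| ≤ 1 := le_trans (aux_abs_le_norm y i) hy
  have hj : |y j| ≤ 1 := le_trans (aux_abs_le_norm y j) hy
  calc ‖y i * y j‖ = |y i| * |y j| := by rw [Real.norm_eq_abs, abs_mul]
    _ ≤ 1 * 1 := mul_le_mul hi hj (abs_nonneg _) zero_le_one
    _ = 1 := one_mul 1

lemma aux_cross_zero (hd : 2 ≤ d) (μ : Measure (EuclideanSpace ℝ (Fin d)))
    (hμ : μ = (volume (Metric.closedBall (0 : EuclideanSpace ℝ (Fin d)) 1))⁻¹ •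
      volume.restrict (Metric.closedBall (0 : EuclideanSpace ℝ (Fin d)) 1))
    (δ : ℝ) :
    ∫ y in {y : EuclideanSpace ℝ (Fin d) | δ ≤ y ⟨0, Nat.lt_of_lt_of_le Nat.zero_lt_two hd⟩},
      (y ⟨0, Nat.lt_of_lt_of_le Nat.zero_lt_two hd⟩ * y ⟨1, Nat.lt_of_lt_of_le Nat.one_lt_two hd⟩) ∂μ = 0 := by
  set i0 : Fin d := ⟨0, by omega⟩
  set i1 : Fin d := ⟨1, by omega⟩
  have hne : i0 ≠ i1 := by simp [i0, i1, Fin.ext_iff]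
  set R : EuclideanSpace ℝ (Fin d) ≃ₗᵢ[ℝ] EuclideanSpace ℝ (Fin d) :=
    LinearIsometryEquiv.piLpCongrRight 2 (fun i : Fin d =>
      if i = i1 then LinearIsometryEquiv.neg ℝ else LinearIsometryEquiv.refl ℝ ℝ) with hR
  have hRapp : ∀ (y : EuclideanSpace ℝ (Fin d)) (i : Fin d),
      R y i = if i = i1 then -(y i) else y i := by
    intro y i
    rw [hR, LinearIsometryEquiv.piLpCongrRight_apply]
    by_cases h : i = i1
    · subst h; simp
    · simp [h]
  have hR0 : ∀ y : EuclideanSpace ℝ (Fin d), R y i0 = y i0 := by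
    intro y; rw [hRapp]; simp [hne]
  have hR1 : ∀ y : EuclideanSpace ℝ (Fin d), R y i1 = -(y i1) := by
    intro y; rw [hRapp]; simp
  set S : Set (EuclideanSpace ℝ (Fin d)) := {y | δ ≤ y i0} with hS
  have hpre : ⇑R ⁻¹' S = S := by
    ext y; simp only [Set.mem_preimage, hS, Set.mem_setOf_eq, hR0]
  have hmp := aux_mp μ hμ R
  have key := hmp.setIntegral_preimage_emb R.toHomeomorph.measurableEmbedding
    (fun y => y i0 * y i1) S
  rw [hpre] at key
  have : ∫ y in S, (R y i0) * (R y i1) ∂μ = ∫ y in S, -(y i0 * y i1) ∂μ := by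
    exact integral_congr_ae (Filter.Eventually.of_forall fun y => by
      simp only [hR0, hR1]; ring)
  rw [this, integral_neg] at key
  linarith

end Aux

/-- Second moments of the uniform distribution on the unit ball restricted
to a halfspace. For unit vectors `b, w`, `δ ∈ [0,1)`, and `μ` the uniform probability
measure on the closed unit ball of `ℝ^d` (`d ≥ 2`),
`∫_{⟨b,x⟩ ≥ δ} ⟨w,x⟩² dμ = α + (γ − α)⟨w,b⟩²` where `α = ∫_{x₁ ≥ δ} x₂² dμ` and
`γ = ∫_{x₁ ≥ δ} x₁² dμ`. -/
theorem restricted_second_moment_identity (d : ℕ) (hd : 2 ≤ d)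
    (μ : Measure (EuclideanSpace ℝ (Fin d)))
    (hμ : μ = (volume (Metric.closedBall (0 : EuclideanSpace ℝ (Fin d)) 1))⁻¹ •
      volume.restrict (Metric.closedBall (0 : EuclideanSpace ℝ (Fin d)) 1))
    (δ : ℝ) (hδ : δ ∈ Set.Ico (0 : ℝ) 1)
    (b w : EuclideanSpace ℝ (Fin d)) (hb : ‖b‖ = 1) (hw : ‖w‖ = 1) :
    ∫ x in {x : EuclideanSpace ℝ (Fin d) | δ ≤ ⟪b, x⟫}, ⟪w, x⟫ ^ 2 ∂μ =
      (∫ x in {x : EuclideanSpace ℝ (Fin d) | δ ≤ x ⟨0, by omega⟩},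
          (x ⟨1, by omega⟩) ^ 2 ∂μ) +
        ((∫ x in {x : EuclideanSpace ℝ (Fin d) | δ ≤ x ⟨0, by omega⟩},
            (x ⟨0, by omega⟩) ^ 2 ∂μ) -
          (∫ x in {x : EuclideanSpace ℝ (Fin d) | δ ≤ x ⟨0, by omega⟩},
            (x ⟨1, by omega⟩) ^ 2 ∂μ)) * ⟪w, b⟫ ^ 2 := by
  set i0 : Fin d := ⟨0, by omega⟩
  set i1 : Fin d := ⟨1, by omega⟩
  have hne : i0 ≠ i1 := by simp [i0, i1, Fin.ext_iff]
  set c : ℝ := ⟪w, b⟫ with hc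
  set S : Set (EuclideanSpace ℝ (Fin d)) := {y | δ ≤ y i0} with hSdef
  set γ : ℝ := ∫ y in S, (y i0) ^ 2 ∂μ with hγ
  set α : ℝ := ∫ y in S, (y i1) ^ 2 ∂μ with hα
  have hcard : Module.finrank ℝ (EuclideanSpace ℝ (Fin d)) = Fintype.card (Fin d) := by
    simp
  have hbb : ⟪b, b⟫ = (1 : ℝ) := by
    rw [real_inner_self_eq_norm_sq, hb]; norm_num
  have main : ∀ (B : OrthonormalBasis (Fin d) ℝ (EuclideanSpace ℝ (Fin d))) (s : ℝ),
      B i0 = b → (∀ x, ⟪w, x⟫ = c * ⟪B i0, x⟫ + s * ⟪B i1, x⟫) →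
      (∫ x in {x : EuclideanSpace ℝ (Fin d) | δ ≤ ⟪b, x⟫}, ⟪w, x⟫ ^ 2 ∂μ)
        = c ^ 2 * γ + s ^ 2 * α := by
    intro B s hB0 hwx
    set e := B.repr with he
    have hrep : ∀ (x : EuclideanSpace ℝ (Fin d)) (i : Fin d), e x i = ⟪B i, x⟫ := by
      intro x i
      exact B.repr_apply_apply x i
    have hset : {x : EuclideanSpace ℝ (Fin d) | δ ≤ ⟪b, x⟫} = ⇑e ⁻¹' S := by
      ext x
      simp only [Set.mem_setOf_eq, Set.mem_preimage, hSdef, hrep, hB0]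
    have hmp := aux_mp μ hμ (e : EuclideanSpace ℝ (Fin d) ≃ₗᵢ[ℝ] EuclideanSpace ℝ (Fin d))
    have key := hmp.setIntegral_preimage_emb
      (e : EuclideanSpace ℝ (Fin d) ≃ₗᵢ[ℝ] EuclideanSpace ℝ (Fin d)).toHomeomorph.measurableEmbedding
      (fun y => (c * y i0 + s * y i1) ^ 2) S
    have hintegrand : ∀ x : EuclideanSpace ℝ (Fin d),
        ⟪w, x⟫ ^ 2 = (c * (e x) i0 + s * (e x) i1) ^ 2 := by
      intro x
      rw [hwx x, hrep, hrep]
    have h00 := aux_integrable μ hμ S i0 i0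
    have h01 := aux_integrable μ hμ S i0 i1
    have h11 := aux_integrable μ hμ S i1 i1
    calc ∫ x in {x : EuclideanSpace ℝ (Fin d) | δ ≤ ⟪b, x⟫}, ⟪w, x⟫ ^ 2 ∂μ
        = ∫ x in ⇑e ⁻¹' S, (c * (e x) i0 + s * (e x) i1) ^ 2 ∂μ := by
          rw [← hset]
          exact integral_congr_ae (Filter.Eventually.of_forall fun x => hintegrand x)
      _ = ∫ y in S, (c * y i0 + s * y i1) ^ 2 ∂μ := key
      _ = ∫ y in S, (c ^ 2 * (y i0 * y i0) + ((2 * c * s) * (y i0 * y i1)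
            + s ^ 2 * (y i1 * y i1))) ∂μ := by
          exact integral_congr_ae (Filter.Eventually.of_forall fun y => by ring)
      _ = c ^ 2 * γ + s ^ 2 * α := by
          have hA : Integrable (fun y : EuclideanSpace ℝ (Fin d) =>
              c ^ 2 * (y i0 * y i0)) (μ.restrict S) := h00.const_mul _
          have hB : Integrable (fun y : EuclideanSpace ℝ (Fin d) =>
              (2 * c * s) * (y i0 * y i1)) (μ.restrict S) := h01.const_mul _
          have hC : Integrable (fun y : EuclideanSpace ℝ (Fin d) =>
              s ^ 2 * (y i1 * y i1)) (μ.restrict S) := h11.const_mul _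
          have hBC : Integrable (fun y : EuclideanSpace ℝ (Fin d) =>
              (2 * c * s) * (y i0 * y i1) + s ^ 2 * (y i1 * y i1)) (μ.restrict S) := hB.add hC
          rw [integral_add hA hBC, integral_add hB hC,
            integral_const_mul, integral_const_mul, integral_const_mul]
          have hz : ∫ y in S, y i0 * y i1 ∂μ = 0 := aux_cross_zero hd μ hμ δ
          rw [hz]
          have e0 : ∫ y in S, y i0 * y i0 ∂μ = γ := by
            rw [hγ]
            exact integral_congr_ae (Filter.Eventually.of_forall fun y => by ring)
          have e1 : ∫ y in S, y i1 * y i1 ∂μ = α := by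
            rw [hα]
            exact integral_congr_ae (Filter.Eventually.of_forall fun y => by ring)
          rw [e0, e1]; ring
  by_cases hdeg : w - c • b = 0
  · have hwc : w = c • b := by rwa [sub_eq_zero] at hdeg
    have hc2 : c ^ 2 = 1 := by
      have : ‖w‖ = |c| * ‖b‖ := by rw [hwc, norm_smul, Real.norm_eq_abs]
      rw [hb, hw, mul_one] at this
      rw [← sq_abs, ← this]; norm_num
    have horth : Orthonormal ℝ (Set.restrict {i0} (fun _ : Fin d => b)) := by
      rw [orthonormal_iff_ite]
      rintro ⟨i, hi⟩ ⟨j, hj⟩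
      simp only [Set.mem_singleton_iff] at hi hj
      subst hi; subst hj
      simp [hbb, hb, Set.restrict]
    obtain ⟨B, hB⟩ := horth.exists_orthonormalBasis_extension_of_card_eq hcard
    have hB0 : B i0 = b := hB i0 rfl
    have hwx : ∀ x, ⟪w, x⟫ = c * ⟪B i0, x⟫ + (0:ℝ) * ⟪B i1, x⟫ := by
      intro x
      rw [hB0]
      conv_lhs => rw [hwc]
      rw [real_inner_smul_left]; ring
    have := main B 0 hB0 hwx
    rw [this]
    linear_combination α * hc2
  · set s : ℝ := ‖w - c • b‖ with hs
    have hspos : 0 < s := by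
      rw [hs]; exact norm_pos_iff.2 hdeg
    set u : EuclideanSpace ℝ (Fin d) := s⁻¹ • (w - c • b) with hu
    have hbu : ⟪b, u⟫ = (0:ℝ) := by
      rw [hu, real_inner_smul_right, inner_sub_right, real_inner_smul_right, hbb]
      have hcw : (inner ℝ b w) = c := by rw [hc]; exact real_inner_comm w b
      rw [hcw]; ring
    have hub : ⟪u, b⟫ = (0:ℝ) := by rw [real_inner_comm, hbu]
    have hnu : ‖u‖ = 1 := by
      rw [hu, norm_smul, Real.norm_eq_abs, abs_inv, abs_of_pos hspos, ← hs,
        inv_mul_cancel₀ hspos.ne']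
    have huu : ⟪u, u⟫ = (1:ℝ) := by
      rw [real_inner_self_eq_norm_sq, hnu]; norm_num
    have horth : Orthonormal ℝ (Set.restrict {i0, i1}
        (fun i : Fin d => if i = i0 then b else u)) := by
      rw [orthonormal_iff_ite]
      rintro ⟨i, hi⟩ ⟨j, hj⟩
      simp only [Set.mem_insert_iff, Set.mem_singleton_iff] at hi hj
      rcases hi with rfl | rfl <;> rcases hj with rfl | rfl <;>
        simp only [Set.restrict_apply, if_pos rfl, if_neg (Ne.symm hne), Subtype.mk.injEq] <;>
        simp [Set.restrict, hne, Ne.symm hne, hbb, huu, hbu, hub, hb, hnu]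
    obtain ⟨B, hB⟩ := horth.exists_orthonormalBasis_extension_of_card_eq hcard
    have hB0 : B i0 = b := by
      have h := hB i0 (Set.mem_insert _ _)
      rwa [if_pos rfl] at h
    have hB1 : B i1 = u := by
      have h := hB i1 (Set.mem_insert_iff.2 (Or.inr rfl))
      rwa [if_neg (Ne.symm hne)] at h
    have hwdecomp : w = c • b + s • u := by
      rw [hu, smul_smul, mul_inv_cancel₀ hspos.ne', one_smul]
      abel
    have hwx : ∀ x, ⟪w, x⟫ = c * ⟪B i0, x⟫ + s * ⟪B i1, x⟫ := by
      intro x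
      rw [hB0, hB1]
      conv_lhs => rw [hwdecomp]
      rw [inner_add_left, real_inner_smul_left, real_inner_smul_left]
    have hpyth : c ^ 2 + s ^ 2 = 1 := by
      have h2 : ‖w‖ ^ 2 = ‖c • b‖ ^ 2 + ‖s • u‖ ^ 2 := by
        rw [hwdecomp, norm_add_sq_real]
        have hz : ⟪c • b, s • u⟫ = (0:ℝ) := by
          rw [real_inner_smul_left, real_inner_smul_right, hbu]; ring
        rw [hz]; ring
      rw [hw, norm_smul, norm_smul, hb, hnu, Real.norm_eq_abs, Real.norm_eq_abs] at h2
      simp only [mul_one, sq_abs] at h2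
      rw [one_pow] at h2
      nlinarith [sq_abs c, sq_abs s, h2]
    have := main B s hB0 hwx
    rw [this]
    linear_combination α * hpyth
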